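/- Let X ~ N(0,1) be a standard normal random variable. Then E[exp(X²/2)] = +∞, while for every N ≥ 2, E[min(exp(X²/2), N)] ≤ sqrt(4·log(N)/π) + 1/sqrt(π·log(N)). -/

import Mathlib

open MeasureTheory ProbabilityTheory Real Set Filter Topology
open scoped ENNReal NNReal

lemma pdf_eq (x : ℝ) : gaussianPDFReal 0 1 x = (Real.sqrt (2*π))⁻¹ * Real.exp (-x^2/2) := by
  simp [gaussianPDFReal]

lemma int_exp : Integrable (fun x : ℝ => Real.exp (-x^2/2)) := by
  have hrw : ∀ x : ℝ, Real.exp (-x^2/2) = Real.exp (-(1/2)*x^2) := by intro x; ring_nf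
  simp only [hrw]
  exact integrable_exp_neg_mul_sq one_half_pos

lemma tail_int {a : ℝ} (ha : 0 < a) :
    ∫ x in Ioi a, Real.exp (-x^2/2) ≤ Real.exp (-a^2/2) / a := by
  have hrw : ∀ x : ℝ, Real.exp (-x^2/2) = Real.exp (-(1/2)*x^2) := by intro x; ring_nf
  have hint1 : IntegrableOn (fun x => Real.exp (-x^2/2)) (Ioi a) := int_exp.integrableOn
  have hint2 : Integrable (fun x:ℝ => x * Real.exp (-x^2/2)) := by
    simp only [hrw]
    exact integrable_mul_exp_neg_mul_sq one_half_pos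
  have h1 : ∫ x in Ioi a, x * Real.exp (-x^2/2) = Real.exp (-a^2/2) := by
    have hderiv : ∀ x ∈ Ici a, HasDerivAt (fun y : ℝ => -Real.exp (-y^2/2))
        (x * Real.exp (-x^2/2)) x := by
      intro x _
      have h : HasDerivAt (fun y : ℝ => -y^2/2) (-x) x := by
        have := ((hasDerivAt_pow 2 x).neg).div_const 2
        refine this.congr_deriv ?_
        push_cast; ring
      have := (h.exp).neg
      refine this.congr_deriv ?_
      ring
    have htend : Tendsto (fun y : ℝ => -Real.exp (-y^2/2)) atTop (𝓝 0) := by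
      rw [show (0:ℝ) = -0 by ring]
      apply Tendsto.neg
      have h2 : Tendsto (fun y : ℝ => y^2/2) atTop atTop :=
        (tendsto_pow_atTop two_ne_zero).atTop_div_const two_pos
      have := tendsto_exp_neg_atTop_nhds_zero.comp h2
      convert this using 2 with y
      simp [Function.comp]; ring_nf
    have := integral_Ioi_of_hasDerivAt_of_tendsto' hderiv hint2.integrableOn htend
    rw [this]; ring
  calc ∫ x in Ioi a, Real.exp (-x^2/2)
      ≤ ∫ x in Ioi a, (x/a) * Real.exp (-x^2/2) := by
        apply setIntegral_mono_on hint1 _ measurableSet_Ioi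
        · intro x hx
          have hx1 : 1 ≤ x / a := (one_le_div ha).2 (le_of_lt hx)
          nlinarith [Real.exp_nonneg (-x^2/2)]
        · have : (fun x => (x/a) * Real.exp (-x^2/2))
              = fun x => a⁻¹ * (x * Real.exp (-x^2/2)) := by funext x; ring
          rw [this]
          exact (hint2.const_mul _).integrableOn
    _ = a⁻¹ * ∫ x in Ioi a, x * Real.exp (-x^2/2) := by
        rw [← integral_const_mul]; congr 1; funext x; ring
    _ = Real.exp (-a^2/2) / a := by rw [h1]; ring


open MeasureTheory ProbabilityTheory Real

/-- For `X ~ N(0,1)`: `E[exp(X²/2)] = ∞`, while for every `N ≥ 2`,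
`E[min(exp(X²/2), N)] ≤ √(4·log N/π) + 1/√(π·log N)`. -/
theorem stmt_4 {Ω : Type*} [MeasurableSpace Ω] (P : Measure Ω)
    [IsProbabilityMeasure P] (X : Ω → ℝ) (hX : Measurable X)
    (hlaw : Measure.map X P = gaussianReal 0 1) :
    (∫⁻ ω, ENNReal.ofReal (Real.exp (X ω ^ 2 / 2)) ∂P = ⊤) ∧
    (∀ N : ℕ, 2 ≤ N →
      ∫ ω, min (Real.exp (X ω ^ 2 / 2)) (N : ℝ) ∂P ≤
        Real.sqrt (4 * Real.log N / π) + 1 / Real.sqrt (π * Real.log N)) := by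
  constructor
  · have hm : Measurable fun x : ℝ => ENNReal.ofReal (Real.exp (x^2/2)) :=
      (Real.measurable_exp.comp ((measurable_id.pow_const 2).div_const 2)).ennreal_ofReal
    have h1 : ∫⁻ ω, ENNReal.ofReal (Real.exp (X ω ^ 2 / 2)) ∂P
        = ∫⁻ x, ENNReal.ofReal (Real.exp (x ^ 2 / 2)) ∂(gaussianReal 0 1) := by
      rw [← hlaw, lintegral_map hm hX]
    rw [h1, gaussianReal_of_var_ne_zero 0 one_ne_zero,
      lintegral_withDensity_eq_lintegral_mul _ (measurable_gaussianPDF 0 1) hm]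
    have h2 : ∀ x : ℝ, (gaussianPDF 0 1 * fun x => ENNReal.ofReal (Real.exp (x^2/2))) x
        = ENNReal.ofReal ((Real.sqrt (2*π))⁻¹) := by
      intro x
      simp only [Pi.mul_apply, gaussianPDF, pdf_eq, ← ENNReal.ofReal_mul
        (by positivity : (0:ℝ) ≤ (Real.sqrt (2*π))⁻¹ * Real.exp (-x^2/2))]
      congr 1
      rw [mul_assoc, ← Real.exp_add, show -x^2/2 + x^2/2 = 0 by ring, Real.exp_zero, mul_one]
    rw [lintegral_congr h2, lintegral_const]
    rw [ENNReal.mul_eq_top]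
    left
    exact ⟨(ENNReal.ofReal_pos.2 (inv_pos.2 (Real.sqrt_pos.2 (by positivity)))).ne', by simp⟩
  · intro N hN
    have hN1 : (1:ℝ) < N := by exact_mod_cast Nat.lt_of_lt_of_le one_lt_two hN
    have hNpos : (0:ℝ) < N := by linarith
    set L := Real.log N with hLdef
    have hL : 0 < L := Real.log_pos hN1
    set a := Real.sqrt (2*L) with hadef
    have ha : 0 < a := Real.sqrt_pos.2 (by linarith)
    have ha2 : a^2 = 2*L := Real.sq_sqrt (by linarith)
    set c := (Real.sqrt (2*π))⁻¹ with hcdef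
    have hc : 0 < c := inv_pos.2 (Real.sqrt_pos.2 (by positivity))
    have hc2 : c^2 = (2*π)⁻¹ := by
      rw [hcdef, inv_pow, Real.sq_sqrt (by positivity : (0:ℝ) ≤ 2*π)]
    have hexp : Real.exp (-a^2/2) = (N:ℝ)⁻¹ := by
      rw [ha2, show -(2*L)/2 = -L by ring, Real.exp_neg, hLdef, Real.exp_log hNpos]
    set T : ℝ → ℝ := fun x => (N:ℝ) * (c * Real.exp (-x^2/2)) with hTdef
    have hTint : Integrable T := ((int_exp.const_mul c).const_mul _)
    have hTnonneg : ∀ x, 0 ≤ T x := fun x => by positivity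
    have hI1 : Integrable ((Icc (-a) a).indicator (fun _ => c)) := by
      rw [integrable_indicator_iff measurableSet_Icc]
      exact integrableOn_const (by rw [Real.volume_Icc]; exact ENNReal.ofReal_ne_top)
    have hI2 : Integrable ((Iic (-a)).indicator T) := hTint.indicator measurableSet_Iic
    have hI3 : Integrable ((Ioi a).indicator T) := hTint.indicator measurableSet_Ioi
    have hfsm : AEStronglyMeasurable (fun x : ℝ => min (Real.exp (x^2/2)) (N:ℝ))
        (Measure.map X P) :=
      ((Real.continuous_exp.comp (by continuity)).min continuous_const).aestronglyMeasurable
    have step1 : ∫ ω, min (Real.exp (X ω ^ 2 / 2)) (N : ℝ) ∂P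
        = ∫ x, min (Real.exp (x ^ 2 / 2)) (N:ℝ) ∂(gaussianReal 0 1) := by
      rw [← hlaw, integral_map hX.aemeasurable hfsm]
    have step2 : ∫ x, min (Real.exp (x ^ 2 / 2)) (N:ℝ) ∂(gaussianReal 0 1)
        = ∫ x, gaussianPDFReal 0 1 x * min (Real.exp (x ^ 2 / 2)) (N:ℝ) := by
      rw [gaussianReal_of_var_ne_zero 0 one_ne_zero]
      have hp : (gaussianPDF 0 1) = fun x => ((gaussianPDFReal 0 1 x).toNNReal : ℝ≥0∞) := rfl
      rw [hp, integral_withDensity_eq_integral_smul (measurable_gaussianPDFReal 0 1).real_toNNReal]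
      congr 1; funext x
      rw [NNReal.smul_def, smul_eq_mul, Real.coe_toNNReal _ (gaussianPDFReal_nonneg 0 1 x)]
    have hle : ∀ x, gaussianPDFReal 0 1 x * min (Real.exp (x^2/2)) (N:ℝ)
        ≤ (Icc (-a) a).indicator (fun _ => c) x + (Iic (-a)).indicator T x
          + (Ioi a).indicator T x := by
      intro x
      rw [pdf_eq, ← hcdef]
      have hnn1 : 0 ≤ (Icc (-a) a).indicator (fun _ : ℝ => c) x :=
        Set.indicator_nonneg (fun _ _ => hc.le) x
      have hnn2 : 0 ≤ (Iic (-a)).indicator T x := Set.indicator_nonneg (fun y _ => hTnonneg y) x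
      have hnn3 : 0 ≤ (Ioi a).indicator T x := Set.indicator_nonneg (fun y _ => hTnonneg y) x
      have hpdf : 0 ≤ c * Real.exp (-x^2/2) := by positivity
      have hminN : c * Real.exp (-x^2/2) * min (Real.exp (x^2/2)) (N:ℝ) ≤ T x := by
        have := min_le_right (Real.exp (x^2/2)) (N:ℝ)
        rw [hTdef]
        nlinarith
      have hminc : c * Real.exp (-x^2/2) * min (Real.exp (x^2/2)) (N:ℝ) ≤ c := by
        have h := min_le_left (Real.exp (x^2/2)) (N:ℝ)
        have : c * Real.exp (-x^2/2) * min (Real.exp (x^2/2)) (N:ℝ)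
            ≤ c * Real.exp (-x^2/2) * Real.exp (x^2/2) := by nlinarith
        calc c * Real.exp (-x^2/2) * min (Real.exp (x^2/2)) (N:ℝ)
            ≤ c * Real.exp (-x^2/2) * Real.exp (x^2/2) := this
          _ = c := by rw [mul_assoc, ← Real.exp_add, show -x^2/2 + x^2/2 = 0 by ring,
              Real.exp_zero, mul_one]
      rcases le_or_gt x (-a) with hx | hx
      · have h2 : (Iic (-a)).indicator T x = T x := Set.indicator_of_mem (mem_Iic.2 hx) _
        linarith
      · rcases le_or_gt x a with hx' | hx'
        · have h1 : (Icc (-a) a).indicator (fun _ : ℝ => c) x = c :=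
            Set.indicator_of_mem (mem_Icc.2 ⟨hx.le, hx'⟩) _
          linarith
        · have h3 : (Ioi a).indicator T x = T x := Set.indicator_of_mem (mem_Ioi.2 hx') _
          linarith
    have hIic : ∫ x in Iic (-a), T x = ∫ x in Ioi a, T x := by
      rw [← integral_comp_neg_Ioi]
      congr 1; funext x
      simp only [hTdef, neg_sq]
    have htail : ∫ x in Ioi a, T x ≤ c / a := by
      have h1 : ∫ x in Ioi a, T x = (N:ℝ) * (c * ∫ x in Ioi a, Real.exp (-x^2/2)) := by
        rw [hTdef, integral_const_mul, integral_const_mul]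
      rw [h1]
      have h2 := tail_int ha
      rw [hexp] at h2
      calc (N:ℝ) * (c * ∫ x in Ioi a, Real.exp (-x^2/2))
          ≤ (N:ℝ) * (c * ((N:ℝ)⁻¹ / a)) := by
            apply mul_le_mul_of_nonneg_left _ hNpos.le
            exact mul_le_mul_of_nonneg_left h2 hc.le
        _ = c / a := by field_simp <;> ring
    have E1 : 2*a*c = Real.sqrt (4*L/π) := by
      have h4 : 4*L/π = (2*a*c)^2 := by
        rw [mul_pow, mul_pow, ha2, hc2]
        field_simp <;> ring
      rw [h4, Real.sqrt_sq (by positivity)]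
    have E2 : 2*c/a = 1 / Real.sqrt (π*L) := by
      have h5 : π*L = (a/(2*c))^2 := by
        rw [div_pow, mul_pow, ha2, hc2]
        field_simp <;> ring
      rw [h5, Real.sqrt_sq (by positivity), one_div_div]
    calc ∫ ω, min (Real.exp (X ω ^ 2 / 2)) (N : ℝ) ∂P
        = ∫ x, gaussianPDFReal 0 1 x * min (Real.exp (x ^ 2 / 2)) (N:ℝ) := step1.trans step2
      _ ≤ ∫ x, ((Icc (-a) a).indicator (fun _ => c) + (Iic (-a)).indicator T
          + (Ioi a).indicator T) x := by
          apply integral_mono_of_nonneg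
          · exact ae_of_all _ fun x => mul_nonneg (gaussianPDFReal_nonneg 0 1 x)
              (le_min (Real.exp_pos _).le (Nat.cast_nonneg N))
          · exact (hI1.add hI2).add hI3
          · exact ae_of_all _ hle
      _ = (∫ x, (Icc (-a) a).indicator (fun _ => c) x) + (∫ x, (Iic (-a)).indicator T x)
          + ∫ x, (Ioi a).indicator T x := by
          rw [integral_add' (hI1.add hI2) hI3, integral_add' hI1 hI2]
      _ ≤ 2*a*c + 2 * (c/a) := by
          have hIcc : ∫ x, (Icc (-a) a).indicator (fun _ : ℝ => c) x = 2*a*c := by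
            rw [integral_indicator measurableSet_Icc, setIntegral_const, Real.volume_real_Icc_of_le (by linarith),
              smul_eq_mul]
            ring
          have h2' : ∫ x, (Iic (-a)).indicator T x = ∫ x in Iic (-a), T x :=
            integral_indicator measurableSet_Iic
          have h3' : ∫ x, (Ioi a).indicator T x = ∫ x in Ioi a, T x :=
            integral_indicator measurableSet_Ioi
          linarith [hIcc, h2', h3', hIic, htail]
      _ = Real.sqrt (4*L/π) + 1 / Real.sqrt (π*L) := by
          rw [← E1, ← E2]
          ring
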